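/- Let χ₁ be the indicator function of the double coset S_n τ_{1,n+1} S_n in S_{n+1} and let χ₀ be the indicator of S_n. Then, with convolution by the normalized Haar measure, χ₁ * χ₁ = ((n-1)/(n+1)) χ₁ + (n/(n+1)) χ₀. -/

import Mathlib

open scoped Classical

/-- `S_n` embedded in `S_{n+1}` as the stabilizer of the last point `n+1`. -/
def Sn (n : ℕ) : Subgroup (Equiv.Perm (Fin (n + 1))) :=
  MulAction.stabilizer (Equiv.Perm (Fin (n + 1))) (Fin.last n)

/-- The double coset `Sₙ σ Sₙ` in `S_{n+1}`. -/
def doset (n : ℕ) (σ : Equiv.Perm (Fin (n + 1))) : Set (Equiv.Perm (Fin (n + 1))) :=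
  {x | ∃ h ∈ Sn n, ∃ h' ∈ Sn n, x = h * σ * h'}

/-- Convolution on `S_{n+1}` w.r.t. the normalized Haar measure. -/
noncomputable def conv (n : ℕ) (f g : Equiv.Perm (Fin (n + 1)) → ℂ) :
    Equiv.Perm (Fin (n + 1)) → ℂ :=
  fun x => (Nat.factorial (n + 1) : ℂ)⁻¹ * ∑ y : Equiv.Perm (Fin (n + 1)), f y * g (y⁻¹ * x)

/-- Indicator of the double coset `Sₙ τ_{1,n+1} Sₙ`. -/
noncomputable def chi1 (n : ℕ) : Equiv.Perm (Fin (n + 1)) → ℂ :=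
  fun x => if x ∈ doset n (Equiv.swap 0 (Fin.last n)) then 1 else 0

/-- Indicator of the subgroup `Sₙ`. -/
noncomputable def chi0 (n : ℕ) : Equiv.Perm (Fin (n + 1)) → ℂ :=
  fun x => if x ∈ Sn n then 1 else 0

lemma mem_Sn_iff {n : ℕ} (x : Equiv.Perm (Fin (n+1))) :
    x ∈ Sn n ↔ x (Fin.last n) = Fin.last n := Iff.rfl

lemma fiber_card (n : ℕ) (c : Fin (n+1)) :
    (Finset.univ.filter (fun y : Equiv.Perm (Fin (n+1)) => y (Fin.last n) = c)).card
      = n.factorial := by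
  have hbij : ∀ c : Fin (n+1),
      (Finset.univ.filter (fun y : Equiv.Perm (Fin (n+1)) => y (Fin.last n) = c)).card
        = (Finset.univ.filter
            (fun y : Equiv.Perm (Fin (n+1)) => y (Fin.last n) = Fin.last n)).card := by
    intro c
    apply Finset.card_bij' (fun y _ => Equiv.swap c (Fin.last n) * y)
      (fun y _ => Equiv.swap c (Fin.last n) * y)
    · intro y hy
      simp only [Finset.mem_filter, Finset.mem_univ, true_and] at hy ⊢
      simp [hy, Equiv.swap_apply_left]
    · intro y hy
      simp only [Finset.mem_filter, Finset.mem_univ, true_and] at hy ⊢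
      simp [hy, Equiv.swap_apply_right]
    · intro y _; simp [← mul_assoc]
    · intro y _; simp [← mul_assoc]
  have htot : (Finset.univ : Finset (Equiv.Perm (Fin (n+1)))).card
      = ∑ b : Fin (n+1),
          (Finset.univ.filter (fun y : Equiv.Perm (Fin (n+1)) => y (Fin.last n) = b)).card :=
    Finset.card_eq_sum_card_fiberwise (fun x _ => Finset.mem_univ _)
  have hsum : ∑ b : Fin (n+1),
      (Finset.univ.filter (fun y : Equiv.Perm (Fin (n+1)) => y (Fin.last n) = b)).card
      = (n+1) * (Finset.univ.filter
          (fun y : Equiv.Perm (Fin (n+1)) => y (Fin.last n) = Fin.last n)).card := by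
    rw [Finset.sum_congr rfl (fun b _ => hbij b), Finset.sum_const, Finset.card_univ,
      Fintype.card_fin, smul_eq_mul]
  have hcard : (Finset.univ : Finset (Equiv.Perm (Fin (n+1)))).card = (n+1).factorial := by
    rw [Finset.card_univ, Fintype.card_perm, Fintype.card_fin]
  rw [hbij c]
  have : (n+1) * (Finset.univ.filter
      (fun y : Equiv.Perm (Fin (n+1)) => y (Fin.last n) = Fin.last n)).card
      = (n+1) * n.factorial := by
    rw [← hsum, ← htot, hcard, Nat.factorial_succ]
  exact Nat.eq_of_mul_eq_mul_left (Nat.succ_pos n) this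

lemma count_filter (n : ℕ) (p : Fin (n+1) → Prop) [DecidablePred p] :
    (Finset.univ.filter (fun y : Equiv.Perm (Fin (n+1)) => p (y (Fin.last n)))).card
      = (Finset.univ.filter p).card * n.factorial := by
  rw [Finset.card_eq_sum_card_fiberwise
    (f := fun y : Equiv.Perm (Fin (n+1)) => y (Fin.last n))
    (t := Finset.univ.filter p) (fun y hy => by
      simp only [Finset.mem_coe, Finset.mem_filter, Finset.mem_univ, true_and] at hy ⊢; exact hy)]
  rw [Finset.sum_congr rfl (fun b hb => ?_), Finset.sum_const, smul_eq_mul]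
  have hpb : p b := (Finset.mem_filter.mp hb).2
  have : (Finset.univ.filter (fun y : Equiv.Perm (Fin (n+1)) => p (y (Fin.last n)))).filter
      (fun y => y (Fin.last n) = b)
      = Finset.univ.filter (fun y : Equiv.Perm (Fin (n+1)) => y (Fin.last n) = b) := by
    ext y
    simp only [Finset.mem_filter, Finset.mem_univ, true_and, and_iff_right_iff_imp]
    intro h; rw [h]; exact hpb
  rw [this, fiber_card]

lemma zero_ne_last (n : ℕ) (hn : 1 ≤ n) : (0 : Fin (n+1)) ≠ Fin.last n := by
  simp [Fin.ext_iff]; omega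

lemma mem_doset_iff (n : ℕ) (hn : 1 ≤ n) (x : Equiv.Perm (Fin (n+1))) :
    x ∈ doset n (Equiv.swap 0 (Fin.last n)) ↔ x (Fin.last n) ≠ Fin.last n := by
  have h0 := zero_ne_last n hn
  constructor
  · rintro ⟨h, hh, h', hh', rfl⟩
    rw [mem_Sn_iff] at hh hh'
    simp only [Equiv.Perm.mul_apply, hh', Equiv.swap_apply_right]
    intro hc
    exact h0 (h.injective (hc.trans hh.symm))
  · intro ha
    refine ⟨Equiv.swap 0 (x (Fin.last n)), ?_, Equiv.swap 0 (Fin.last n) *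
      Equiv.swap 0 (x (Fin.last n)) * x, ?_, ?_⟩
    · rw [mem_Sn_iff]
      exact Equiv.swap_apply_of_ne_of_ne h0.symm (Ne.symm ha)
    · rw [mem_Sn_iff]
      simp [Equiv.Perm.mul_apply, Equiv.swap_apply_right, Equiv.swap_apply_left]
    · group
      simp [← mul_assoc, Equiv.swap_mul_self]

/-- `χ₁ * χ₁ = ((n-1)/(n+1)) χ₁ + (n/(n+1)) χ₀`. -/
theorem stmt13 (n : ℕ) (hn : 1 ≤ n) :
    conv n (chi1 n) (chi1 n) =
      fun x => ((n : ℂ) - 1) / ((n : ℂ) + 1) * chi1 n x + (n : ℂ) / ((n : ℂ) + 1) * chi0 n x := by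
  funext x
  have key : ∀ y : Equiv.Perm (Fin (n+1)), chi1 n y * chi1 n (y⁻¹ * x)
      = if (y (Fin.last n) ≠ Fin.last n ∧ y (Fin.last n) ≠ x (Fin.last n)) then 1 else 0 := by
    intro y
    have h1 : (y⁻¹ * x) (Fin.last n) ≠ Fin.last n ↔ y (Fin.last n) ≠ x (Fin.last n) := by
      rw [Equiv.Perm.mul_apply, ne_eq, Equiv.Perm.inv_eq_iff_eq, eq_comm, ne_eq]
    simp only [chi1, mem_doset_iff n hn, h1]
    by_cases hp : y (Fin.last n) ≠ Fin.last n <;>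
      by_cases hq : y (Fin.last n) ≠ x (Fin.last n) <;> simp [hp, hq]
  simp only [conv]
  rw [Finset.sum_congr rfl (fun y _ => key y), Finset.sum_boole,
    count_filter n (fun b => b ≠ Fin.last n ∧ b ≠ x (Fin.last n))]
  have hfac : ((n+1).factorial : ℂ) = ((n:ℂ)+1) * (n.factorial : ℂ) := by
    rw [Nat.factorial_succ]; push_cast; ring
  have hn1 : ((n:ℂ)+1) ≠ 0 := by
    have : ((n+1:ℕ):ℂ) ≠ 0 := Nat.cast_ne_zero.mpr n.succ_ne_zero
    push_cast at this; exact this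
  have hfn : ((n.factorial : ℂ)) ≠ 0 := by
    exact_mod_cast Nat.cast_ne_zero.mpr (Nat.factorial_ne_zero n)
  by_cases hx : x (Fin.last n) = Fin.last n
  · have hc : (Finset.univ.filter
        (fun b : Fin (n+1) => b ≠ Fin.last n ∧ b ≠ x (Fin.last n))).card = n := by
      rw [hx]
      simp only [and_self]
      rw [Finset.filter_ne', Finset.card_erase_of_mem (Finset.mem_univ _), Finset.card_univ,
        Fintype.card_fin]
      omega
    rw [hc]
    have h1 : chi1 n x = 0 := by simp [chi1, mem_doset_iff n hn, hx]
    have h0 : chi0 n x = 1 := by simp [chi0, mem_Sn_iff, hx]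
    rw [h1, h0, hfac]
    push_cast
    field_simp
    ring
  · have hc : (Finset.univ.filter
        (fun b : Fin (n+1) => b ≠ Fin.last n ∧ b ≠ x (Fin.last n))).card = n - 1 := by
      have : (Finset.univ.filter
          (fun b : Fin (n+1) => b ≠ Fin.last n ∧ b ≠ x (Fin.last n)))
          = (Finset.univ.erase (Fin.last n)).erase (x (Fin.last n)) := by
        ext b
        simp only [Finset.mem_filter, Finset.mem_univ, true_and, Finset.mem_erase]
        tauto
      rw [this, Finset.card_erase_of_mem (Finset.mem_erase.mpr ⟨hx, Finset.mem_univ _⟩),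
        Finset.card_erase_of_mem (Finset.mem_univ _), Finset.card_univ, Fintype.card_fin]
      omega
    rw [hc]
    have h1 : chi1 n x = 1 := by simp [chi1, mem_doset_iff n hn, hx]
    have h0 : chi0 n x = 0 := by simp [chi0, mem_Sn_iff, hx]
    rw [h1, h0, hfac]
    have hcast : (((n:ℕ) - 1 : ℕ) : ℂ) = (n : ℂ) - 1 := by
      push_cast [Nat.cast_sub hn]; ring
    push_cast [hcast]
    field_simp
    ring
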